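/- Let H be a connected graph satisfying vc(H) ≤ LP_VC(H) + d, where vc is the vertex cover number and LP_VC is the optimum of the fractional vertex cover LP. Then every minimal blocking set Y of H satisfies |Y| ≤ 2d + 2. -/

import Mathlib

attribute [local instance] Classical.propDecidable

namespace VCKernel

variable {V : Type*} [Fintype V] [DecidableEq V]

/-- `S` is an independent set of `G`. -/
def IsIndep (G : SimpleGraph V) (S : Finset V) : Prop :=
  ∀ u ∈ S, ∀ v ∈ S, ¬ G.Adj u v

/-- Independence number of the subgraph of `G` induced on the vertex set `A`. -/
noncomputable def alphaOn (G : SimpleGraph V) (A : Set V) : ℕ :=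
  sSup {n | ∃ S : Finset V, ↑S ⊆ A ∧ IsIndep G S ∧ S.card = n}

/-- Independence number `α(G)`. -/
noncomputable def alpha (G : SimpleGraph V) : ℕ := alphaOn G Set.univ

/-- `Y` is a blocking set: deleting it decreases the independence number. -/
def IsBlocking (G : SimpleGraph V) (Y : Finset V) : Prop :=
  alphaOn G (Set.univ \ ↑Y) < alpha G

/-- `Y` is a minimal blocking set. -/
def IsMinBlocking (G : SimpleGraph V) (Y : Finset V) : Prop :=
  IsBlocking G Y ∧ ∀ Y' ⊂ Y, ¬ IsBlocking G Y'

/-- Open neighborhood of the vertex set `X'` in `G`. -/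
def nbhd (G : SimpleGraph V) (X' : Finset V) : Set V :=
  {v | ∃ u ∈ X', G.Adj u v}

/-- Number of conflicts induced by `X'` on the induced subgraph with vertex set `A`. -/
noncomputable def conf (G : SimpleGraph V) (A : Set V) (X' : Finset V) : ℕ :=
  alphaOn G A - alphaOn G (A \ nbhd G X')

/-- `C` is (the vertex set of) a connected component of the subgraph of `G`
induced on `A`. -/
def IsCompOf (G : SimpleGraph V) (A C : Set V) : Prop :=
  C ⊆ A ∧ (G.induce C).Connected ∧ ∀ u ∈ C, ∀ v ∈ A, G.Adj u v → v ∈ C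

/-- Feasible solution to the Independent Set LP of the subgraph induced on `A`. -/
def FeasISOn (G : SimpleGraph V) (A : Set V) (x : V → ℝ) : Prop :=
  (∀ v ∈ A, 0 ≤ x v ∧ x v ≤ 1) ∧
    ∀ u ∈ A, ∀ v ∈ A, G.Adj u v → x u + x v ≤ 1

/-- Half-integrality on `A`. -/
def HalfIntOn (A : Set V) (x : V → ℝ) : Prop :=
  ∀ v ∈ A, x v = 0 ∨ x v = 1/2 ∨ x v = 1

/-- Objective value of an LP solution on vertex set `A`. -/
noncomputable def weightOn (A : Set V) (x : V → ℝ) : ℝ :=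
  ∑ v, if v ∈ A then x v else 0

/-- `x` is an optimum half-integral solution to the Independent Set LP
of the subgraph induced on `A`. -/
def OptHIOn (G : SimpleGraph V) (A : Set V) (x : V → ℝ) : Prop :=
  FeasISOn G A x ∧ HalfIntOn A x ∧
    ∀ y : V → ℝ, FeasISOn G A y → HalfIntOn A y → weightOn A y ≤ weightOn A x

/-- Feasible solution to the Vertex Cover LP of `G`. -/
def FeasVC (G : SimpleGraph V) (x : V → ℝ) : Prop :=
  (∀ v, 0 ≤ x v ∧ x v ≤ 1) ∧ ∀ u v, G.Adj u v → 1 ≤ x u + x v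

/-- Optimum value of the Independent Set LP of `G`. -/
noncomputable def lpIS (G : SimpleGraph V) : ℝ :=
  sSup {w | ∃ x : V → ℝ, FeasISOn G Set.univ x ∧ w = ∑ v, x v}

/-- Optimum value of the Vertex Cover LP of `G`. -/
noncomputable def lpVC (G : SimpleGraph V) : ℝ :=
  sInf {w | ∃ x : V → ℝ, FeasVC G x ∧ w = ∑ v, x v}

/-- `C` is a vertex cover of `G`. -/
def IsVC (G : SimpleGraph V) (C : Finset V) : Prop :=
  ∀ u v, G.Adj u v → u ∈ C ∨ v ∈ C

/-- Vertex cover number of `G`. -/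
noncomputable def vcNum (G : SimpleGraph V) : ℕ :=
  sInf {n | ∃ C : Finset V, IsVC G C ∧ C.card = n}

/-- `Z` is a feedback vertex set of `G`. -/
def IsFVS (G : SimpleGraph V) (Z : Finset V) : Prop :=
  (G.induce ((↑Z : Set V)ᶜ)).IsAcyclic

/-- `Z` is an odd cycle transversal of `G`. -/
def IsOCT (G : SimpleGraph V) (Z : Finset V) : Prop :=
  (G.induce ((↑Z : Set V)ᶜ)).Colorable 2

/-- `G` is a `d`-quasi-forest: each connected component has a feedback
vertex set of size at most `d`. -/
def QuasiForest (G : SimpleGraph V) (d : ℕ) : Prop :=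
  ∀ C : Set V, IsCompOf G Set.univ C →
    ∃ Z : Finset V, Z.card ≤ d ∧ (G.induce (C \ ↑Z)).IsAcyclic

/-- `G` is `d`-quasi-bipartite: each connected component has an odd cycle
transversal of size at most `d`. -/
def QuasiBipartite (G : SimpleGraph V) (d : ℕ) : Prop :=
  ∀ C : Set V, IsCompOf G Set.univ C →
    ∃ Z : Finset V, Z.card ≤ d ∧ (G.induce (C \ ↑Z)).Colorable 2

/-- Feedback vertex set number of `G`. -/
noncomputable def fvsNum (G : SimpleGraph V) : ℕ :=
  sInf {n | ∃ Z : Finset V, IsFVS G Z ∧ Z.card = n}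

/-- Odd cycle transversal number of `G`. -/
noncomputable def octNum (G : SimpleGraph V) : ℕ :=
  sInf {n | ∃ Z : Finset V, IsOCT G Z ∧ Z.card = n}

/-- The subgraph of `G` induced on `A` has treedepth at most `k`
(elimination-forest characterization of treedepth). -/
def tdLE (G : SimpleGraph V) : ℕ → Set V → Prop
  | 0, A => A = ∅
  | (k+1), A => ∀ C : Set V, IsCompOf G A C → ∃ v ∈ C, tdLE G k (C \ {v})

set_option linter.unusedSectionVars false
set_option linter.unusedVariables false
set_option maxHeartbeats 1000000

lemma aux_bddAbove (G : SimpleGraph V) (A : Set V) :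
    BddAbove {n | ∃ S : Finset V, ↑S ⊆ A ∧ IsIndep G S ∧ S.card = n} := by
  refine ⟨Fintype.card V, ?_⟩; rintro n ⟨S, -, -, rfl⟩; exact Finset.card_le_univ S

lemma aux_alphaOn_spec (G : SimpleGraph V) (A : Set V) :
    ∃ S : Finset V, ↑S ⊆ A ∧ IsIndep G S ∧ S.card = alphaOn G A := by
  have h0 : (0:ℕ) ∈ {n | ∃ S : Finset V, ↑S ⊆ A ∧ IsIndep G S ∧ S.card = n} :=
    ⟨∅, by simp, by intro u hu; simp at hu, by simp⟩
  exact Nat.sSup_mem ⟨0, h0⟩ (aux_bddAbove G A)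

lemma aux_le_alphaOn (G : SimpleGraph V) {A : Set V} {S : Finset V}
    (hS : ↑S ⊆ A) (hind : IsIndep G S) : S.card ≤ alphaOn G A :=
  le_csSup (aux_bddAbove G A) ⟨S, hS, hind, rfl⟩

lemma aux_alphaOn_mono (G : SimpleGraph V) {A B : Set V} (h : A ⊆ B) :
    alphaOn G A ≤ alphaOn G B := by
  obtain ⟨S, hS, hind, hcard⟩ := aux_alphaOn_spec G A
  rw [← hcard]; exact aux_le_alphaOn G (hS.trans h) hind

lemma aux_block_bound (G : SimpleGraph V) {Y : Finset V} (hY : IsBlocking G Y)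
    {J : Finset V} (hind : IsIndep G J) (hJY : ∀ v ∈ J, v ∉ Y) :
    J.card < alpha G := by
  have hsub : ↑J ⊆ (Set.univ \ (↑Y : Set V)) := by
    intro v hv
    simp only [Set.mem_diff, Set.mem_univ, true_and, Finset.mem_coe] at *
    exact hJY v hv
  exact lt_of_le_of_lt (aux_le_alphaOn G hsub hind) hY

lemma aux_exists_Iy (G : SimpleGraph V) {Y : Finset V} (hY : IsMinBlocking G Y) :
    ∀ y ∈ Y, ∃ S : Finset V, IsIndep G S ∧ S.card = alpha G ∧ S ∩ Y = {y} := by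
  intro y hy
  have hss : Y.erase y ⊂ Y := Finset.erase_ssubset hy
  have hnb := hY.2 _ hss
  have hge : alpha G ≤ alphaOn G (Set.univ \ ↑(Y.erase y)) := le_of_not_gt hnb
  have hle : alphaOn G (Set.univ \ ↑(Y.erase y)) ≤ alpha G :=
    aux_alphaOn_mono G (by intro v hv; exact Set.mem_univ v)
  have heq : alphaOn G (Set.univ \ ↑(Y.erase y)) = alpha G := le_antisymm hle hge
  obtain ⟨S, hSsub, hind, hcard⟩ := aux_alphaOn_spec G (Set.univ \ ↑(Y.erase y))
  rw [heq] at hcard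
  have hSer : ∀ v ∈ S, v ∉ Y.erase y := by
    intro v hv hvy
    have := hSsub (Finset.mem_coe.2 hv)
    simp only [Set.mem_diff, Set.mem_univ, true_and, Finset.mem_coe] at this
    exact this hvy
  have hyS : y ∈ S := by
    by_contra hyS
    have hJY : ∀ v ∈ S, v ∉ Y := by
      intro v hv hvY
      rcases eq_or_ne v y with rfl | hne
      · exact hyS hv
      · exact hSer v hv (Finset.mem_erase.2 ⟨hne, hvY⟩)
    have := aux_block_bound G hY.1 hind hJY
    omega
  refine ⟨S, hind, hcard, ?_⟩
  ext a
  simp only [Finset.mem_inter, Finset.mem_singleton]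
  constructor
  · rintro ⟨haS, haY⟩
    by_contra hne
    exact hSer a haS (Finset.mem_erase.2 ⟨hne, haY⟩)
  · rintro rfl
    exact ⟨hyS, hy⟩

lemma aux_card_le_vc_add_alpha (G : SimpleGraph V) :
    Fintype.card V ≤ vcNum G + alpha G := by
  have hne : ∃ n, n ∈ {n | ∃ C : Finset V, IsVC G C ∧ C.card = n} :=
    ⟨(Finset.univ : Finset V).card, Finset.univ, fun u v _ => Or.inl (Finset.mem_univ u), rfl⟩
  obtain ⟨C, hC, hCcard⟩ := Nat.sInf_mem hne
  have hind : IsIndep G (Finset.univ \ C) := by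
    intro u hu v hv hadj
    rcases hC u v hadj with h' | h'
    · exact (Finset.mem_sdiff.1 hu).2 h'
    · exact (Finset.mem_sdiff.1 hv).2 h'
  have hle : (Finset.univ \ C).card ≤ alpha G :=
    aux_le_alphaOn G (by simp) hind
  have hcd : (Finset.univ \ C).card = Fintype.card V - C.card := by
    rw [Finset.card_sdiff_of_subset (Finset.subset_univ C), Finset.card_univ]
  have hCle : C.card ≤ Fintype.card V := Finset.card_le_univ C
  unfold vcNum
  omega

lemma aux_lpVC_le (G : SimpleGraph V) {x : V → ℝ} (hx : FeasVC G x) :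
    lpVC G ≤ ∑ v, x v := by
  apply csInf_le
  · refine ⟨0, ?_⟩
    rintro w ⟨z, hz, rfl⟩
    exact Finset.sum_nonneg fun v _ => (hz.1 v).1
  · exact ⟨x, hx, rfl⟩

section core
variable (G : SimpleGraph V) (Y : Finset V) (I : V → Finset V)

noncomputable def cdeg (v : V) : ℕ := (Y.filter (fun y => v ∈ I y)).card

noncomputable def Tset : Finset V := Finset.univ.filter (fun v => cdeg Y I v = Y.card)

noncomputable def Uset : Finset V :=
  Finset.univ.filter (fun v => v ∉ Y ∧ 0 < cdeg Y I v ∧ cdeg Y I v < Y.card)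

noncomputable def Qset : Finset V := (Uset Y I).filter (fun v => Y.card < 2 * cdeg Y I v)

noncomputable def NWset (W : Finset V) : Finset V :=
  Finset.univ.filter (fun v => v ∉ Y ∧ 0 < cdeg Y I v ∧ ∃ u ∈ W, G.Adj u v)

variable {G Y I}

/-- hypothesis bundle -/
def IProp : Prop :=
  ∀ y ∈ Y, IsIndep G (I y) ∧ (I y).card = alpha G ∧ (I y) ∩ Y = {y}

variable (hI : IProp (G:=G) (Y:=Y) (I:=I))

lemma cdeg_le (v : V) : cdeg Y I v ≤ Y.card := Finset.card_filter_le _ _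

include hI in
lemma cdeg_y {y : V} (hy : y ∈ Y) : cdeg Y I y = 1 := by
  have hfe : Y.filter (fun y' => y ∈ I y') = {y} := by
    ext a
    simp only [Finset.mem_filter, Finset.mem_singleton]
    constructor
    · rintro ⟨haY, hyIa⟩
      have h3 := (hI a haY).2.2
      have hmem : y ∈ I a ∩ Y := Finset.mem_inter.2 ⟨hyIa, hy⟩
      rw [h3] at hmem
      exact (Finset.mem_singleton.1 hmem).symm
    · rintro rfl
      refine ⟨hy, ?_⟩
      have h3 := (hI a hy).2.2
      have hmem : a ∈ ({a} : Finset V) := Finset.mem_singleton_self a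
      rw [← h3] at hmem
      exact (Finset.mem_inter.1 hmem).1
  rw [cdeg, hfe, Finset.card_singleton]

include hI in
lemma cdeg_adj {u v : V} (huv : G.Adj u v) : cdeg Y I u + cdeg Y I v ≤ Y.card := by
  have hdisj : Disjoint (Y.filter (fun y => u ∈ I y)) (Y.filter (fun y => v ∈ I y)) := by
    rw [Finset.disjoint_left]
    intro a ha ha'
    have h1 := (Finset.mem_filter.1 ha)
    have h2 := (Finset.mem_filter.1 ha')
    exact (hI a h1.1).1 u h1.2 v h2.2 huv
  calc cdeg Y I u + cdeg Y I v
      = ((Y.filter (fun y => u ∈ I y)) ∪ (Y.filter (fun y => v ∈ I y))).card := by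
        rw [Finset.card_union_of_disjoint hdisj]; rfl
    _ ≤ Y.card := Finset.card_le_card (by
        intro a ha
        rcases Finset.mem_union.1 ha with h | h
        · exact (Finset.mem_filter.1 h).1
        · exact (Finset.mem_filter.1 h).1)

lemma Tset_mem {v : V} (hv : v ∈ Tset Y I) {y : V} (hy : y ∈ Y) : v ∈ I y := by
  have hc : (Y.filter (fun y => v ∈ I y)).card = Y.card := (Finset.mem_filter.1 hv).2
  have heq : Y.filter (fun y => v ∈ I y) = Y :=
    Finset.eq_of_subset_of_card_le (Finset.filter_subset _ _) (le_of_eq hc.symm)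
  have hy2 : y ∈ Y.filter (fun y => v ∈ I y) := by rw [heq]; exact hy
  exact (Finset.mem_filter.1 hy2).2

include hI in
lemma Tset_adj {v x : V} (hv : v ∈ Tset Y I) (hadj : G.Adj v x) : cdeg Y I x = 0 := by
  rw [cdeg, Finset.card_eq_zero, Finset.filter_eq_empty_iff]
  intro y hy hxI
  exact (hI y hy).1 v (Tset_mem hv hy) x hxI hadj

include hI in
lemma sum_cdeg_univ : ∑ v, cdeg Y I v = Y.card * alpha G := by
  have h1 : ∀ v, cdeg Y I v = ∑ y ∈ Y, (if v ∈ I y then 1 else 0) := by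
    intro v; rw [cdeg, Finset.card_filter]
  rw [Finset.sum_congr rfl (fun v _ => h1 v), Finset.sum_comm]
  have h2 : ∀ y ∈ Y, (∑ v : V, if v ∈ I y then 1 else 0) = alpha G := by
    intro y hy
    have : (∑ v : V, if v ∈ I y then 1 else 0) = (Finset.univ.filter (fun v => v ∈ I y)).card := by
      rw [Finset.card_filter]
    rw [this, Finset.filter_mem_eq_inter, Finset.univ_inter, (hI y hy).2.1]
  rw [Finset.sum_congr rfl h2, Finset.sum_const, smul_eq_mul]


include hI in
lemma Pset_indep (hm2 : 2 ≤ Y.card) {W : Finset V} (hW : W ⊆ Qset Y I) :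
    ∀ p ∈ W ∪ Tset Y I, Y.card < 2 * cdeg Y I p ∧ p ∉ Y := by
  intro p hp
  rcases Finset.mem_union.1 hp with hp | hp
  · have hq := Finset.mem_filter.1 (hW hp)
    have hu := Finset.mem_filter.1 hq.1
    exact ⟨hq.2, hu.2.1⟩
  · have hc : cdeg Y I p = Y.card := (Finset.mem_filter.1 hp).2
    constructor
    · omega
    · intro hpY
      have := cdeg_y hI hpY
      omega

include hI in
lemma star_y (hblock : IsBlocking G Y) (hm2 : 2 ≤ Y.card)
    {W : Finset V} (hW : W ⊆ Qset Y I) {y : V} (hy : y ∈ Y) :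
    (W.filter (fun u => u ∉ I y)).card ≤ ((NWset G Y I W).filter (fun v => v ∈ I y)).card := by
  classical
  set P : Finset V := W ∪ Tset Y I with hP
  have hPfact := Pset_indep hI hm2 hW
  have hPind : IsIndep G P := by
    intro u hu v hv hadj
    have h1 := (hPfact u hu).1
    have h2 := (hPfact v hv).1
    have := cdeg_adj hI hadj
    omega
  set F : Finset V := (I y).filter (fun v => v ≠ y ∧ ∀ u ∈ P, ¬ G.Adj u v) with hF
  set B : Finset V := P ∪ F with hB
  have hBind : IsIndep G B := by
    intro a ha b hb hadj
    rcases Finset.mem_union.1 ha with ha' | ha' <;> rcases Finset.mem_union.1 hb with hb' | hb'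
    · exact hPind a ha' b hb' hadj
    · exact (Finset.mem_filter.1 hb').2.2 a ha' hadj
    · exact (Finset.mem_filter.1 ha').2.2 b hb' hadj.symm
    · exact (hI y hy).1 a (Finset.mem_filter.1 ha').1 b (Finset.mem_filter.1 hb').1 hadj
  have hBY : ∀ v ∈ B, v ∉ Y := by
    intro v hv
    rcases Finset.mem_union.1 hv with hv' | hv'
    · exact (hPfact v hv').2
    · have hm := Finset.mem_filter.1 hv'
      intro hvY
      have : v ∈ I y ∩ Y := Finset.mem_inter.2 ⟨hm.1, hvY⟩
      rw [(hI y hy).2.2] at this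
      exact hm.2.1 (Finset.mem_singleton.1 this)
  have hBcard : B.card < alpha G := aux_block_bound G hblock hBind hBY
  -- lower bound on B.card
  have hdisjWF : Disjoint (W.filter (fun u => u ∉ I y)) F := by
    rw [Finset.disjoint_left]
    intro a ha haF
    exact (Finset.mem_filter.1 ha).2 (Finset.mem_filter.1 haF).1
  have hlow : (W.filter (fun u => u ∉ I y)).card + F.card ≤ B.card := by
    rw [← Finset.card_union_of_disjoint hdisjWF]
    apply Finset.card_le_card
    intro a ha
    rcases Finset.mem_union.1 ha with ha | ha
    · exact Finset.mem_union.2 (Or.inl (Finset.mem_union.2 (Or.inl (Finset.mem_filter.1 ha).1)))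
    · exact Finset.mem_union.2 (Or.inr ha)
  -- upper bound on alpha
  have hcover : I y ⊆ F ∪ ({y} ∪ ((NWset G Y I W).filter (fun v => v ∈ I y))) := by
    intro v hv
    by_cases hvy : v = y
    · subst hvy
      exact Finset.mem_union.2 (Or.inr (Finset.mem_union.2 (Or.inl (Finset.mem_singleton_self v))))
    by_cases hadj : ∀ u ∈ P, ¬ G.Adj u v
    · exact Finset.mem_union.2 (Or.inl (Finset.mem_filter.2 ⟨hv, hvy, hadj⟩))
    · push_neg at hadj
      obtain ⟨u, huP, huv⟩ := hadj
      have hcv : 0 < cdeg Y I v := by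
        rw [cdeg, Finset.card_pos]
        exact ⟨y, Finset.mem_filter.2 ⟨hy, hv⟩⟩
      have huW : u ∈ W := by
        rcases Finset.mem_union.1 huP with h | h
        · exact h
        · have := Tset_adj hI h huv
          omega
      have hvY : v ∉ Y := by
        intro hvY
        have : v ∈ I y ∩ Y := Finset.mem_inter.2 ⟨hv, hvY⟩
        rw [(hI y hy).2.2] at this
        exact hvy (Finset.mem_singleton.1 this)
      refine Finset.mem_union.2 (Or.inr (Finset.mem_union.2 (Or.inr ?_)))
      refine Finset.mem_filter.2 ⟨?_, hv⟩
      exact Finset.mem_filter.2 ⟨Finset.mem_univ v, hvY, hcv, u, huW, huv⟩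
  have hup : alpha G ≤ F.card + (1 + ((NWset G Y I W).filter (fun v => v ∈ I y)).card) := by
    calc alpha G = (I y).card := ((hI y hy).2.1).symm
      _ ≤ (F ∪ ({y} ∪ ((NWset G Y I W).filter (fun v => v ∈ I y)))).card :=
          Finset.card_le_card hcover
      _ ≤ F.card + ({y} ∪ ((NWset G Y I W).filter (fun v => v ∈ I y))).card :=
          Finset.card_union_le _ _
      _ ≤ F.card + (1 + ((NWset G Y I W).filter (fun v => v ∈ I y)).card) := by
          have := Finset.card_union_le ({y} : Finset V)
            ((NWset G Y I W).filter (fun v => v ∈ I y))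
          simp only [Finset.card_singleton] at this
          omega
  omega


include hI in
lemma starR (hblock : IsBlocking G Y) (hm2 : 2 ≤ Y.card)
    {W : Finset V} (hW : W ⊆ Qset Y I) :
    ∑ u ∈ W, ((Y.card:ℝ) - cdeg Y I u) ≤ ∑ v ∈ NWset G Y I W, (cdeg Y I v : ℝ) := by
  classical
  have h1 : ∑ y ∈ Y, (W.filter (fun u => u ∉ I y)).card
      ≤ ∑ y ∈ Y, ((NWset G Y I W).filter (fun v => v ∈ I y)).card :=
    Finset.sum_le_sum (fun y hy => star_y hI hblock hm2 hW hy)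
  have h2 : ∑ y ∈ Y, ((NWset G Y I W).filter (fun v => v ∈ I y)).card
      = ∑ v ∈ NWset G Y I W, cdeg Y I v := by
    have : ∀ y ∈ Y, ((NWset G Y I W).filter (fun v => v ∈ I y)).card
        = ∑ v ∈ NWset G Y I W, (if v ∈ I y then 1 else 0) := by
      intro y _; rw [Finset.card_filter]
    rw [Finset.sum_congr rfl this, Finset.sum_comm]
    exact Finset.sum_congr rfl (fun v _ => by rw [cdeg, Finset.card_filter])
  have h3 : ∑ y ∈ Y, (W.filter (fun u => u ∉ I y)).card + ∑ u ∈ W, cdeg Y I u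
      = W.card * Y.card := by
    have hA : ∀ y ∈ Y, (W.filter (fun u => u ∉ I y)).card
        = ∑ u ∈ W, (if u ∈ I y then 0 else 1) := by
      intro y _
      rw [Finset.card_filter]
      exact Finset.sum_congr rfl (fun u _ => by by_cases h : u ∈ I y <;> simp [h])
    rw [Finset.sum_congr rfl hA, Finset.sum_comm]
    have hB : ∀ u ∈ W, (∑ y ∈ Y, if u ∈ I y then 0 else 1) + cdeg Y I u = Y.card := by
      intro u _
      rw [cdeg, Finset.card_filter]
      rw [← Finset.sum_add_distrib]
      have : ∀ y ∈ Y, ((if u ∈ I y then 0 else 1) + (if u ∈ I y then 1 else 0)) = 1 := by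
        intro y _; by_cases h : u ∈ I y <;> simp [h]
      rw [Finset.sum_congr rfl this, Finset.sum_const, smul_eq_mul, mul_one]
    calc ∑ u ∈ W, ∑ y ∈ Y, (if u ∈ I y then 0 else 1) + ∑ u ∈ W, cdeg Y I u
        = ∑ u ∈ W, ((∑ y ∈ Y, if u ∈ I y then 0 else 1) + cdeg Y I u) := by
          rw [Finset.sum_add_distrib]
      _ = ∑ u ∈ W, Y.card := Finset.sum_congr rfl hB
      _ = W.card * Y.card := by rw [Finset.sum_const, smul_eq_mul]
  have hcast1 : ∑ u ∈ W, ((Y.card:ℝ) - cdeg Y I u)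
      = (W.card * Y.card : ℕ) - ((∑ u ∈ W, cdeg Y I u : ℕ) : ℝ) := by
    rw [Finset.sum_sub_distrib, Finset.sum_const, Nat.cast_sum, Nat.cast_mul, nsmul_eq_mul]
  have hcast2 : ((∑ v ∈ NWset G Y I W, cdeg Y I v : ℕ) : ℝ)
      = ∑ v ∈ NWset G Y I W, (cdeg Y I v : ℝ) := Nat.cast_sum _ _
  have h1R : ((∑ y ∈ Y, (W.filter (fun u => u ∉ I y)).card : ℕ):ℝ)
      ≤ ((∑ y ∈ Y, ((NWset G Y I W).filter (fun v => v ∈ I y)).card : ℕ):ℝ) := by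
    exact_mod_cast h1
  have h3R : ((∑ y ∈ Y, (W.filter (fun u => u ∉ I y)).card : ℕ):ℝ)
      + ((∑ u ∈ W, cdeg Y I u : ℕ):ℝ) = ((W.card * Y.card : ℕ):ℝ) := by
    exact_mod_cast congrArg (Nat.cast : ℕ → ℝ) h3
  rw [h2] at h1R
  rw [hcast1]
  rw [hcast2] at h1R
  linarith

include hI in
lemma coreC (hblock : IsBlocking G Y) (hm2 : 2 ≤ Y.card) :
    ∀ (k : ℕ) (W : Finset V), W ⊆ Qset Y I → W.card ≤ k → ∀ ρ : ℝ,
    (∀ u ∈ W, 2*((Y.card:ℝ) - cdeg Y I u) ≤ ρ) →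
    ∑ u ∈ W, (ρ - 2*((Y.card:ℝ) - cdeg Y I u))
      ≤ ∑ v ∈ NWset G Y I W, (ρ - 2*(cdeg Y I v : ℝ)) := by
  intro k
  induction k with
  | zero =>
    intro W hW hcard ρ hρ
    have : W = ∅ := Finset.card_eq_zero.1 (Nat.le_zero.1 hcard)
    subst this
    have hNW : NWset G Y I ∅ = ∅ := by
      rw [NWset, Finset.filter_eq_empty_iff]
      rintro v - ⟨-, -, u, hu, -⟩
      exact absurd hu (Finset.notMem_empty u)
    rw [hNW]
    simp
  | succ k ih =>
    intro W hW hcard ρ hρ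
    rcases Finset.eq_empty_or_nonempty W with rfl | hne
    · have hNW : NWset G Y I ∅ = ∅ := by
        rw [NWset, Finset.filter_eq_empty_iff]
        rintro v - ⟨-, -, u, hu, -⟩
        exact absurd hu (Finset.notMem_empty u)
      rw [hNW]; simp
    -- basic facts about members of W
    have hWfact : ∀ u ∈ W, 0 < cdeg Y I u ∧ cdeg Y I u < Y.card ∧ u ∉ Y ∧ Y.card < 2 * cdeg Y I u := by
      intro u hu
      have hq := Finset.mem_filter.1 (hW hu)
      have hu' := Finset.mem_filter.1 hq.1
      exact ⟨hu'.2.2.1, hu'.2.2.2, hu'.2.1, hq.2⟩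
    set img := W.image (fun u => Y.card - cdeg Y I u) with himg
    have himgne : img.Nonempty := hne.image _
    set rmax := img.max' himgne with hrmax
    obtain ⟨u₀, hu₀W, hu₀⟩ := Finset.mem_image.1 (img.max'_mem himgne)
    have hle : ∀ u ∈ W, Y.card - cdeg Y I u ≤ rmax := by
      intro u hu
      exact Finset.le_max' img (Y.card - cdeg Y I u) (Finset.mem_image_of_mem _ hu)
    have hrpos : 1 ≤ rmax := by
      have := (hWfact u₀ hu₀W).2.1
      omega
    -- real versions
    have hcastsub : ∀ u ∈ W, ((Y.card - cdeg Y I u : ℕ) : ℝ) = (Y.card:ℝ) - cdeg Y I u := by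
      intro u hu
      have := (hWfact u hu).2.1
      push_cast [Nat.cast_sub (le_of_lt this)]
      ring
    have hleR : ∀ u ∈ W, (Y.card:ℝ) - cdeg Y I u ≤ (rmax:ℝ) := by
      intro u hu
      rw [← hcastsub u hu]
      exact_mod_cast hle u hu
    have hu₀R : (Y.card:ℝ) - cdeg Y I u₀ = (rmax:ℝ) := by
      rw [← hcastsub u₀ hu₀W]
      exact_mod_cast congrArg (Nat.cast : ℕ → ℝ) hu₀
    set ρ' : ℝ := 2 * (rmax:ℝ) with hρ'
    have hρ'pos : 0 < ρ' := by
      have : (1:ℝ) ≤ (rmax:ℝ) := by exact_mod_cast hrpos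
      rw [hρ']; linarith
    have hρρ' : ρ' ≤ ρ := by
      have := hρ u₀ hu₀W
      rw [hu₀R] at this
      linarith
    set W' := W.filter (fun u => ¬ (Y.card - cdeg Y I u = rmax)) with hW'
    set Cl := W.filter (fun u => Y.card - cdeg Y I u = rmax) with hCl
    have hW'sub : W' ⊆ W := Finset.filter_subset _ _
    have hW'card : W'.card ≤ k := by
      have hss : W' ⊂ W := by
        refine Finset.ssubset_iff_of_subset hW'sub |>.2 ⟨u₀, hu₀W, ?_⟩
        simp [hW', hu₀]
        exact fun _ => hrmax.symm
      have := Finset.card_lt_card hss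
      omega
    have hIH := ih W' (hW'sub.trans hW) hW'card ρ' (by
      intro u hu
      have huW := hW'sub hu
      have := hleR u huW
      rw [hρ']; linarith)
    have hstar := starR hI hblock hm2 hW
    have hNmono : NWset G Y I W' ⊆ NWset G Y I W := by
      intro v hv
      have hm := Finset.mem_filter.1 hv
      obtain ⟨u, hu, huv⟩ := hm.2.2.2
      exact Finset.mem_filter.2 ⟨hm.1, hm.2.1, hm.2.2.1, u, hW'sub hu, huv⟩
    have hnn : ∀ v ∈ NWset G Y I W, 0 ≤ ρ' - 2*(cdeg Y I v:ℝ) := by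
      intro v hv
      obtain ⟨-, -, u, huW, huv⟩ := (Finset.mem_filter.1 hv).2
      have hadj := cdeg_adj hI huv
      have h1 : (cdeg Y I v : ℝ) ≤ (Y.card:ℝ) - cdeg Y I u := by
        have : (cdeg Y I u + cdeg Y I v : ℕ) ≤ Y.card := hadj
        have := (Nat.cast_le (α := ℝ)).2 this
        push_cast at this
        linarith
      have h2 := hleR u huW
      rw [hρ']; linarith
    have hBmono : ∑ v ∈ NWset G Y I W', (ρ' - 2*(cdeg Y I v:ℝ))
        ≤ ∑ v ∈ NWset G Y I W, (ρ' - 2*(cdeg Y I v:ℝ)) :=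
      Finset.sum_le_sum_of_subset_of_nonneg hNmono (fun v hv _ => hnn v hv)
    -- scaled identity on the NW side
    have hidN : ρ' * (∑ v ∈ NWset G Y I W, (ρ - 2*(cdeg Y I v:ℝ)))
        = (2*ρ - 2*ρ') * (∑ v ∈ NWset G Y I W, (cdeg Y I v:ℝ))
          + ρ * (∑ v ∈ NWset G Y I W, (ρ' - 2*(cdeg Y I v:ℝ))) := by
      rw [Finset.mul_sum, Finset.mul_sum, Finset.mul_sum, ← Finset.sum_add_distrib]
      exact Finset.sum_congr rfl (fun v _ => by ring)
    -- scaled identity on the W side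
    have hidW : ρ' * (∑ u ∈ W, (ρ - 2*((Y.card:ℝ) - cdeg Y I u)))
        = (2*ρ - 2*ρ') * (∑ u ∈ W, ((Y.card:ℝ) - cdeg Y I u))
          + ρ * (∑ u ∈ W, (ρ' - 2*((Y.card:ℝ) - cdeg Y I u))) := by
      rw [Finset.mul_sum, Finset.mul_sum, Finset.mul_sum, ← Finset.sum_add_distrib]
      exact Finset.sum_congr rfl (fun u _ => by ring)
    -- split the W sum of (ρ' - 2(m-c)) into Cl and W'
    have hsplit : ∑ u ∈ W, (ρ' - 2*((Y.card:ℝ) - cdeg Y I u))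
        = ∑ u ∈ Cl, (ρ' - 2*((Y.card:ℝ) - cdeg Y I u))
          + ∑ u ∈ W', (ρ' - 2*((Y.card:ℝ) - cdeg Y I u)) := by
      rw [hCl, hW']
      exact (Finset.sum_filter_add_sum_filter_not W _ _).symm
    have hClzero : ∑ u ∈ Cl, (ρ' - 2*((Y.card:ℝ) - cdeg Y I u)) = 0 := by
      apply Finset.sum_eq_zero
      intro u hu
      have hm := Finset.mem_filter.1 hu
      have : (Y.card:ℝ) - cdeg Y I u = (rmax:ℝ) := by
        rw [← hcastsub u hm.1]
        exact_mod_cast congrArg (Nat.cast : ℕ → ℝ) hm.2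
      rw [this, hρ']; ring
    -- put it together
    have hmain : ρ' * (∑ u ∈ W, (ρ - 2*((Y.card:ℝ) - cdeg Y I u)))
        ≤ ρ' * (∑ v ∈ NWset G Y I W, (ρ - 2*(cdeg Y I v:ℝ))) := by
      rw [hidN, hidW, hsplit, hClzero]
      have hco : 0 ≤ 2*ρ - 2*ρ' := by linarith
      have hρpos : 0 ≤ ρ := by linarith
      have t1 : (2*ρ - 2*ρ') * (∑ u ∈ W, ((Y.card:ℝ) - cdeg Y I u))
          ≤ (2*ρ - 2*ρ') * (∑ v ∈ NWset G Y I W, (cdeg Y I v:ℝ)) :=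
        mul_le_mul_of_nonneg_left hstar hco
      have t2 : ρ * (∑ u ∈ W', (ρ' - 2*((Y.card:ℝ) - cdeg Y I u)))
          ≤ ρ * (∑ v ∈ NWset G Y I W, (ρ' - 2*(cdeg Y I v:ℝ))) :=
        mul_le_mul_of_nonneg_left (le_trans hIH hBmono) hρpos
      linarith
    exact le_of_mul_le_mul_left hmain hρ'pos


end core

/-- If `G` is connected and `vc(G) ≤ LP_VC(G) + d`, then every minimal
blocking set `Y` of `G` satisfies `|Y| ≤ 2d + 2`. -/
theorem stmt10 (G : SimpleGraph V) (d : ℕ) (Y : Finset V)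
    (hconn : G.Connected) (h : (vcNum G : ℝ) ≤ lpVC G + d)
    (hY : IsMinBlocking G Y) :
    Y.card ≤ 2 * d + 2 := by
  by_cases hmle : Y.card ≤ 2
  · omega
  push_neg at hmle
  have hm2 : 2 ≤ Y.card := by omega
  have hm3 : 3 ≤ Y.card := hmle
  have hblock := hY.1
  have hex := aux_exists_Iy G hY
  classical
  set Ich : V → Finset V := fun y => if hy : y ∈ Y then (hex y hy).choose else ∅ with hIch
  have hI : IProp (G:=G) (Y:=Y) (I:=Ich) := by
    intro y hy
    simp only [hIch, dif_pos hy]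
    exact (hex y hy).choose_spec
  -- sum identity over U
  set T := Tset Y Ich with hT
  set U := Uset Y Ich with hU
  set Q := Qset Y Ich with hQ
  have hTc : ∀ v ∈ T, cdeg Y Ich v = Y.card := fun v hv => (Finset.mem_filter.1 hv).2
  have hUc : ∀ v ∈ U, v ∉ Y ∧ 0 < cdeg Y Ich v ∧ cdeg Y Ich v < Y.card :=
    fun v hv => (Finset.mem_filter.1 hv).2
  have hQc : ∀ v ∈ Q, Y.card < 2 * cdeg Y Ich v := fun v hv => (Finset.mem_filter.1 hv).2
  have hQU : Q ⊆ U := Finset.filter_subset _ _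
  have hdTY : Disjoint T Y := by
    rw [Finset.disjoint_left]
    intro v hvT hvY
    have h1 := hTc v hvT
    have h2 := cdeg_y hI hvY
    omega
  have hdTU : Disjoint T U := by
    rw [Finset.disjoint_left]
    intro v hvT hvU
    have h1 := hTc v hvT
    have h2 := (hUc v hvU).2.2
    omega
  have hdYU : Disjoint Y U := by
    rw [Finset.disjoint_left]
    intro v hvY hvU
    exact (hUc v hvU).1 hvY
  have hsumTYU : ∑ v ∈ (T ∪ Y) ∪ U, cdeg Y Ich v = ∑ v, cdeg Y Ich v := by
    apply Finset.sum_subset (Finset.subset_univ _)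
    intro v _ hv
    simp only [Finset.mem_union] at hv
    push_neg at hv
    by_contra hc
    have hpos : 0 < cdeg Y Ich v := Nat.pos_of_ne_zero hc
    have hle := cdeg_le (Y := Y) (I := Ich) v
    rcases Nat.lt_or_ge (cdeg Y Ich v) Y.card with hlt | hge
    · by_cases hvY : v ∈ Y
      · exact hv.1.2 hvY
      · exact hv.2 (Finset.mem_filter.2 ⟨Finset.mem_univ v, hvY, hpos, hlt⟩)
    · have : cdeg Y Ich v = Y.card := le_antisymm hle hge
      exact hv.1.1 (Finset.mem_filter.2 ⟨Finset.mem_univ v, this⟩)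
  have hsumT : ∑ v ∈ T, cdeg Y Ich v = T.card * Y.card := by
    rw [Finset.sum_congr rfl hTc, Finset.sum_const, smul_eq_mul]
  have hsumY : ∑ v ∈ Y, cdeg Y Ich v = Y.card := by
    rw [Finset.sum_congr rfl (fun y hy => cdeg_y hI hy), Finset.sum_const, smul_eq_mul, mul_one]
  have hsumsplit : ∑ v ∈ (T ∪ Y) ∪ U, cdeg Y Ich v
      = T.card * Y.card + Y.card + ∑ v ∈ U, cdeg Y Ich v := by
    rw [Finset.sum_union (by
      rw [Finset.disjoint_union_left]
      exact ⟨hdTU, hdYU⟩), Finset.sum_union hdTY, hsumT, hsumY]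
  have hUsum : T.card * Y.card + Y.card + ∑ v ∈ U, cdeg Y Ich v = Y.card * alpha G := by
    rw [← hsumsplit, hsumTYU, sum_cdeg_univ hI]
  -- core inequality gives nonnegativity
  have hcore := coreC hI hblock hm2 Q.card Q (le_refl _) le_rfl (Y.card : ℝ) (by
    intro u hu
    have h1 := hQc u hu
    have h2 : (Y.card : ℝ) < 2 * (cdeg Y Ich u : ℝ) := by exact_mod_cast h1
    linarith)
  set L := U.filter (fun v => ¬ (Y.card < 2 * cdeg Y Ich v)) with hL
  have hNQL : NWset G Y Ich Q ⊆ L := by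
    intro v hv
    obtain ⟨hvY, hvc, u, huQ, huv⟩ := (Finset.mem_filter.1 hv).2
    have hadj := cdeg_adj hI huv
    have hQu := hQc u huQ
    refine Finset.mem_filter.2 ⟨Finset.mem_filter.2 ⟨Finset.mem_univ v, hvY, hvc, by omega⟩, by omega⟩
  have hLnn : ∀ v ∈ L, (0:ℝ) ≤ (Y.card:ℝ) - 2 * (cdeg Y Ich v : ℝ) := by
    intro v hv
    have := (Finset.mem_filter.1 hv).2
    push_neg at this
    have : (2:ℝ) * (cdeg Y Ich v : ℝ) ≤ (Y.card:ℝ) := by exact_mod_cast this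
    linarith
  have hNQle : ∑ v ∈ NWset G Y Ich Q, ((Y.card:ℝ) - 2 * (cdeg Y Ich v : ℝ))
      ≤ ∑ v ∈ L, ((Y.card:ℝ) - 2 * (cdeg Y Ich v : ℝ)) :=
    Finset.sum_le_sum_of_subset_of_nonneg hNQL (fun v hv _ => hLnn v hv)
  have hQzero : ∑ u ∈ Q, (((Y.card:ℝ) - 2 * (cdeg Y Ich u : ℝ))
      + ((Y.card:ℝ) - 2 * ((Y.card:ℝ) - (cdeg Y Ich u : ℝ)))) = 0 :=
    Finset.sum_eq_zero (fun u _ => by ring)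
  rw [Finset.sum_add_distrib] at hQzero
  have hUQL : ∑ v ∈ U, ((Y.card:ℝ) - 2 * (cdeg Y Ich v : ℝ))
      = ∑ v ∈ Q, ((Y.card:ℝ) - 2 * (cdeg Y Ich v : ℝ))
        + ∑ v ∈ L, ((Y.card:ℝ) - 2 * (cdeg Y Ich v : ℝ)) := by
    rw [hQ, hL]
    exact (Finset.sum_filter_add_sum_filter_not U _ _).symm
  have hUnn : (0:ℝ) ≤ ∑ v ∈ U, ((Y.card:ℝ) - 2 * (cdeg Y Ich v : ℝ)) := by
    rw [hUQL]
    linarith [hcore, hNQle]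
  have hUsub : ∑ v ∈ U, ((Y.card:ℝ) - 2 * (cdeg Y Ich v : ℝ))
      = U.card * (Y.card:ℝ) - 2 * ((∑ v ∈ U, cdeg Y Ich v : ℕ) : ℝ) := by
    rw [Finset.sum_sub_distrib, Finset.sum_const, nsmul_eq_mul, Nat.cast_sum, Finset.mul_sum]
  -- N4 : U.card ≥ 2 alpha - 2 T.card - 2
  have hUsumR : ((∑ v ∈ U, cdeg Y Ich v : ℕ) : ℝ)
      = (Y.card:ℝ) * (alpha G : ℝ) - (T.card:ℝ) * (Y.card:ℝ) - (Y.card:ℝ) := by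
    have h' := congrArg (Nat.cast : ℕ → ℝ) hUsum
    push_cast at h' ⊢
    linarith
  have hN4 : 2 * (alpha G : ℝ) - 2 * (T.card:ℝ) - 2 ≤ (U.card : ℝ) := by
    have hmpos : (0:ℝ) < (Y.card:ℝ) := by
      have : (0:ℕ) < Y.card := by omega
      exact_mod_cast this
    rw [hUsub, hUsumR] at hUnn
    nlinarith
  -- the NT set and the feasible LP solution
  set NT := Finset.univ.filter (fun v => ∃ u ∈ T, G.Adj u v) with hNT
  have hNTc : ∀ v ∈ NT, cdeg Y Ich v = 0 := by
    intro v hv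
    obtain ⟨u, huT, huv⟩ := (Finset.mem_filter.1 hv).2
    exact Tset_adj hI huT huv
  have hdNTT : Disjoint NT T := by
    rw [Finset.disjoint_left]
    intro v hvNT hvT
    have h1 := hNTc v hvNT
    have h2 := hTc v hvT
    omega
  have hdNTY : Disjoint NT Y := by
    rw [Finset.disjoint_left]
    intro v hvNT hvY
    have h1 := hNTc v hvNT
    have h2 := cdeg_y hI hvY
    omega
  have hdNTU : Disjoint NT U := by
    rw [Finset.disjoint_left]
    intro v hvNT hvU
    have h1 := hNTc v hvNT
    have h2 := (hUc v hvU).2.1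
    omega
  have hcard4 : NT.card + T.card + Y.card + U.card ≤ Fintype.card V := by
    have hd1 : Disjoint (NT ∪ T) Y := by
      rw [Finset.disjoint_union_left]
      exact ⟨hdNTY, hdTY⟩
    have hd2 : Disjoint ((NT ∪ T) ∪ Y) U := by
      rw [Finset.disjoint_union_left, Finset.disjoint_union_left]
      exact ⟨⟨hdNTU, hdTU⟩, hdYU⟩
    calc NT.card + T.card + Y.card + U.card
        = (((NT ∪ T) ∪ Y) ∪ U).card := by
          rw [Finset.card_union_of_disjoint hd2, Finset.card_union_of_disjoint hd1,
            Finset.card_union_of_disjoint hdNTT]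
      _ ≤ Fintype.card V := Finset.card_le_univ _
  -- feasible VC solution
  set x : V → ℝ := fun v => if v ∈ NT then (1:ℝ) else if v ∈ T then 0 else 1/2 with hx
  have hx0 : ∀ v, 0 ≤ x v := by
    intro v
    rw [hx]
    by_cases h1 : v ∈ NT <;> by_cases h2 : v ∈ T <;> simp [h1, h2] <;> norm_num
  have hfeas : FeasVC G x := by
    constructor
    · intro v
      refine ⟨hx0 v, ?_⟩
      rw [hx]
      by_cases h1 : v ∈ NT <;> by_cases h2 : v ∈ T <;> simp [h1, h2] <;> norm_num
    · intro u v hadj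
      by_cases h1 : u ∈ NT
      · have : x u = 1 := by rw [hx]; simp [h1]
        have := hx0 v
        linarith [this, hx0 v]
      by_cases h2 : v ∈ NT
      · have hxv : x v = 1 := by rw [hx]; simp [h2]
        have := hx0 u
        linarith
      have h3 : u ∉ T := by
        intro huT
        exact h2 (Finset.mem_filter.2 ⟨Finset.mem_univ v, u, huT, hadj⟩)
      have h4 : v ∉ T := by
        intro hvT
        exact h1 (Finset.mem_filter.2 ⟨Finset.mem_univ u, v, hvT, hadj.symm⟩)
      have hxu : x u = 1/2 := by rw [hx]; simp [h1, h3]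
      have hxv : x v = 1/2 := by rw [hx]; simp [h2, h4]
      rw [hxu, hxv]; norm_num
  set R := Finset.univ.filter (fun v => v ∉ NT ∧ v ∉ T) with hR
  have hsumx : ∑ v, x v = (NT.card : ℝ) + (R.card : ℝ) * (1/2) := by
    rw [← Finset.sum_filter_add_sum_filter_not Finset.univ (fun v => v ∈ NT) x]
    have e1 : Finset.univ.filter (fun v => v ∈ NT) = NT := by
      rw [Finset.filter_mem_eq_inter, Finset.univ_inter]
    have e2 : ∑ v ∈ Finset.univ.filter (fun v => v ∈ NT), x v = (NT.card : ℝ) := by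
      rw [e1]
      rw [Finset.sum_congr rfl (fun v hv => by rw [hx]; simp [hv] : ∀ v ∈ NT, x v = 1)]
      rw [Finset.sum_const, nsmul_eq_mul, mul_one]
    rw [e2]
    rw [← Finset.sum_filter_add_sum_filter_not (Finset.univ.filter (fun v => v ∉ NT))
      (fun v => v ∈ T) x]
    have e3 : ∑ v ∈ (Finset.univ.filter (fun v => v ∉ NT)).filter (fun v => v ∈ T), x v = 0 := by
      apply Finset.sum_eq_zero
      intro v hv
      have h1 := Finset.mem_filter.1 hv
      have h2 := Finset.mem_filter.1 h1.1
      rw [hx]; simp [h2.2, h1.2]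
    have e4 : (Finset.univ.filter (fun v => v ∉ NT)).filter (fun v => v ∉ T) = R := by
      rw [hR, Finset.filter_filter]
    have e5 : ∑ v ∈ (Finset.univ.filter (fun v => v ∉ NT)).filter (fun v => ¬ v ∈ T), x v
        = (R.card : ℝ) * (1/2) := by
      have e4' : (Finset.univ.filter (fun v => v ∉ NT)).filter (fun v => ¬ v ∈ T) = R := e4
      rw [e4']
      have : ∀ v ∈ R, x v = 1/2 := by
        intro v hv
        have h1 := (Finset.mem_filter.1 hv).2
        rw [hx]; simp [h1.1, h1.2]
      rw [Finset.sum_congr rfl this, Finset.sum_const, nsmul_eq_mul]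
    rw [e3, e5]
    ring
  have hpartR : NT.card + T.card + R.card = Fintype.card V := by
    have hdNTR : Disjoint NT R := by
      rw [Finset.disjoint_left]
      intro v hvNT hvR
      exact (Finset.mem_filter.1 hvR).2.1 hvNT
    have hdTR : Disjoint T R := by
      rw [Finset.disjoint_left]
      intro v hvT hvR
      exact (Finset.mem_filter.1 hvR).2.2 hvT
    have hcover : (NT ∪ T) ∪ R = Finset.univ := by
      ext v
      simp only [Finset.mem_union, Finset.mem_univ, iff_true]
      by_cases h1 : v ∈ NT
      · exact Or.inl (Or.inl h1)
      by_cases h2 : v ∈ T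
      · exact Or.inl (Or.inr h2)
      · exact Or.inr (Finset.mem_filter.2 ⟨Finset.mem_univ v, h1, h2⟩)
    have := congrArg Finset.card hcover
    rw [Finset.card_union_of_disjoint (by
      rw [Finset.disjoint_union_left]; exact ⟨hdNTR, hdTR⟩),
      Finset.card_union_of_disjoint hdNTT, Finset.card_univ] at this
    exact this
  have hlp : lpVC G ≤ (NT.card : ℝ) + (R.card : ℝ) * (1/2) := by
    rw [← hsumx]
    exact aux_lpVC_le G hfeas
  -- final chain
  have hn : (Fintype.card V : ℝ) ≤ (vcNum G : ℝ) + (alpha G : ℝ) := by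
    exact_mod_cast aux_card_le_vc_add_alpha G
  have hc4R : (NT.card : ℝ) + (T.card : ℝ) + (Y.card : ℝ) + (U.card : ℝ)
      ≤ (Fintype.card V : ℝ) := by exact_mod_cast hcard4
  have hpartRR : (NT.card : ℝ) + (T.card : ℝ) + (R.card : ℝ) = (Fintype.card V : ℝ) := by
    exact_mod_cast hpartR
  have hfinal : (Y.card : ℝ) ≤ 2 * (d:ℝ) + 2 := by
    linarith [hn, h, hlp, hc4R, hpartRR, hN4]
  exact_mod_cast hfinal


end VCKernel
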